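/- Assume in addition that V_{d+2}^n = (|v|² − 1)/‖ |v|² − 1 ‖. Then the function E^n · j^n = Σ_s E_s^n j_s^n lies in the linear span of { X_i^n, ∂_{x_t}X_i^n, K_i^{n+1} : 1 ≤ i ≤ r, 1 ≤ t ≤ d }; in particular E^n · j^n lies in the span of the augmented basis { X̃_k^{n+1} }, so that Σ_k ⟨X̃_k^{n+1}, E^n · j^n⟩_x X̃_k^{n+1} = E^n · j^n. -/

import Mathlib

open MeasureTheory Real Set

noncomputable section

/-- Partial derivative of `u` in the `i`-th coordinate direction. -/
def pd {d : ℕ} (i : Fin d) (u : (Fin d → ℝ) → ℝ) (x : Fin d → ℝ) : ℝ :=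
  fderiv ℝ u x (Pi.single i 1)

/-- Gaussian weight `f_{0v}(v) = exp(-|v|²/2)`. -/
def f0v {d : ℕ} (v : Fin d → ℝ) : ℝ := Real.exp (-(∑ i, v i ^ 2) / 2)

/-- Fundamental domain of the `d`-dimensional torus `Ω_x`. -/
def cube (d : ℕ) : Set (Fin d → ℝ) := Set.univ.pi fun _ => Set.Ioc (0 : ℝ) 1

/-- `L²(Ω_x)` inner product. -/
def ipx {d : ℕ} (u w : (Fin d → ℝ) → ℝ) : ℝ := ∫ x in cube d, u x * w x

/-- Weighted inner product `⟨u,w⟩_v = ∫ f_{0v} u w dv`. -/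
def ipv {d : ℕ} (u w : (Fin d → ℝ) → ℝ) : ℝ := ∫ v, f0v v * u v * w v

/-- Weighted norm `‖w‖ = ⟨w,w⟩_v^{1/2}`. -/
def nv {d : ℕ} (w : (Fin d → ℝ) → ℝ) : ℝ := Real.sqrt (ipv w w)

/-- Periodicity with period 1 in each coordinate (functions on the torus). -/
def Per {d : ℕ} (u : (Fin d → ℝ) → ℝ) : Prop := ∀ x i, u (x + Pi.single i 1) = u x

/-- All (iterated) derivatives have at most polynomial growth. -/
def PolyAll {d : ℕ} (g : (Fin d → ℝ) → ℝ) : Prop :=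
  ∀ n : ℕ, ∃ (C : ℝ) (p : ℕ), ∀ v, ‖iteratedFDeriv ℝ n g v‖ ≤ C * (1 + ‖v‖) ^ p

section Aux
variable {d : ℕ}

/-- Polynomial growth with continuity. -/
def PG {d : ℕ} (g : (Fin d → ℝ) → ℝ) : Prop :=
  Continuous g ∧ ∃ (C : ℝ) (p : ℕ), 0 ≤ C ∧ ∀ v : Fin d → ℝ, |g v| ≤ C * (1 + ‖v‖) ^ p

lemma PG.mul {g h : (Fin d → ℝ) → ℝ} (hg : PG g) (hh : PG h) :
    PG (fun v => g v * h v) := by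
  obtain ⟨hgc, C, p, hC, hgb⟩ := hg
  obtain ⟨hhc, D, q, hD, hhb⟩ := hh
  refine ⟨hgc.mul hhc, C * D, p + q, by positivity, fun v => ?_⟩
  have h1 : (0:ℝ) ≤ 1 + ‖v‖ := by positivity
  calc |g v * h v| = |g v| * |h v| := abs_mul _ _
    _ ≤ (C * (1 + ‖v‖) ^ p) * (D * (1 + ‖v‖) ^ q) :=
        mul_le_mul (hgb v) (hhb v) (abs_nonneg _) (by positivity)
    _ = C * D * (1 + ‖v‖) ^ (p + q) := by rw [pow_add]; ring

lemma PG.add {g h : (Fin d → ℝ) → ℝ} (hg : PG g) (hh : PG h) :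
    PG (fun v => g v + h v) := by
  obtain ⟨hgc, C, p, hC, hgb⟩ := hg
  obtain ⟨hhc, D, q, hD, hhb⟩ := hh
  refine ⟨hgc.add hhc, C + D, max p q, by positivity, fun v => ?_⟩
  have h1 : (1:ℝ) ≤ 1 + ‖v‖ := by simp [norm_nonneg]
  have hp : (1 + ‖v‖) ^ p ≤ (1 + ‖v‖) ^ max p q := pow_le_pow_right₀ h1 (le_max_left _ _)
  have hq : (1 + ‖v‖) ^ q ≤ (1 + ‖v‖) ^ max p q := pow_le_pow_right₀ h1 (le_max_right _ _)
  calc |g v + h v| ≤ |g v| + |h v| := abs_add_le _ _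
    _ ≤ C * (1 + ‖v‖) ^ max p q + D * (1 + ‖v‖) ^ max p q := by
        refine add_le_add ((hgb v).trans ?_) ((hhb v).trans ?_)
        · exact mul_le_mul_of_nonneg_left hp hC
        · exact mul_le_mul_of_nonneg_left hq hD
    _ = (C + D) * (1 + ‖v‖) ^ max p q := by ring

lemma PG.neg {g : (Fin d → ℝ) → ℝ} (hg : PG g) : PG (fun v => -(g v)) := by
  obtain ⟨hgc, C, p, hC, hgb⟩ := hg
  exact ⟨hgc.neg, C, p, hC, fun v => by simpa using hgb v⟩

lemma PG.sub {g h : (Fin d → ℝ) → ℝ} (hg : PG g) (hh : PG h) :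
    PG (fun v => g v - h v) := by
  simpa [sub_eq_add_neg] using hg.add hh.neg

lemma pg_const (c : ℝ) : PG (fun _ : Fin d → ℝ => c) := by
  refine ⟨continuous_const, |c|, 0, abs_nonneg _, fun v => by simp⟩

lemma PG.const_mul {g : (Fin d → ℝ) → ℝ} (hg : PG g) (c : ℝ) :
    PG (fun v => c * g v) := (pg_const c).mul hg

lemma pg_coord (s : Fin d) : PG (fun v : Fin d → ℝ => v s) := by
  refine ⟨continuous_apply s, 1, 1, zero_le_one, fun v => ?_⟩
  have := norm_le_pi_norm v s
  simp only [Real.norm_eq_abs] at this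
  simpa using this.trans (by linarith [norm_nonneg v])

lemma pg_sumsq : PG (fun v : Fin d → ℝ => ∑ i, v i ^ 2) := by
  refine ⟨continuous_finset_sum _ fun i _ => (continuous_apply i).pow 2, d, 2, by positivity,
    fun v => ?_⟩
  have h1 : ∀ i : Fin d, v i ^ 2 ≤ (1 + ‖v‖) ^ 2 := by
    intro i
    have h2 : |v i| ≤ 1 + ‖v‖ := by
      have := norm_le_pi_norm v i
      simp only [Real.norm_eq_abs] at this
      linarith [norm_nonneg v]
    calc v i ^ 2 = |v i| ^ 2 := (sq_abs _).symm
      _ ≤ (1 + ‖v‖) ^ 2 := pow_le_pow_left₀ (abs_nonneg _) h2 2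
  calc |∑ i, v i ^ 2| = ∑ i, v i ^ 2 := abs_of_nonneg (Finset.sum_nonneg fun i _ => sq_nonneg _)
    _ ≤ ∑ _i : Fin d, (1 + ‖v‖) ^ 2 := Finset.sum_le_sum fun i _ => h1 i
    _ = (d : ℝ) * (1 + ‖v‖) ^ 2 := by simp [mul_comm]

lemma pg_of_polyAll {g : (Fin d → ℝ) → ℝ} (hc : Continuous g) (hp : PolyAll g) : PG g := by
  obtain ⟨C, p, hb⟩ := hp 0
  refine ⟨hc, |C|, p, abs_nonneg _, fun v => ?_⟩
  have := hb v
  rw [norm_iteratedFDeriv_zero] at this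
  simp only [Real.norm_eq_abs] at this
  refine this.trans (mul_le_mul_of_nonneg_right (le_abs_self C) (by positivity))

lemma pg_pd {g : (Fin d → ℝ) → ℝ} (hg : ContDiff ℝ (⊤ : ℕ∞) g) (hp : PolyAll g) (s : Fin d) :
    PG (pd s g) := by
  obtain ⟨C, p, hb⟩ := hp 1
  have hcont : Continuous (pd s g) := by
    have h1 : Continuous (fderiv ℝ g) := hg.continuous_fderiv (by simp)
    exact h1.clm_apply continuous_const
  refine ⟨hcont, |C|, p, abs_nonneg _, fun v => ?_⟩
  have h2 : |pd s g v| ≤ ‖fderiv ℝ g v‖ := by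
    have h3 := (fderiv ℝ g v).le_opNorm (Pi.single s (1:ℝ))
    rw [Pi.norm_single] at h3
    simpa [pd] using h3
  have h4 : ‖fderiv ℝ g v‖ ≤ C * (1 + ‖v‖) ^ p := by
    have h5 := hb v
    rwa [← norm_iteratedFDeriv_fderiv, norm_iteratedFDeriv_zero] at h5
  refine (h2.trans h4).trans (mul_le_mul_of_nonneg_right (le_abs_self C) (by positivity))


lemma contDiff_sumsq : ContDiff ℝ (⊤ : ℕ∞) (fun v : Fin d → ℝ => ∑ i, v i ^ 2) := by
  apply ContDiff.sum
  intro i _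
  exact ((ContinuousLinearMap.proj (R := ℝ) (φ := fun _ : Fin d => ℝ) i).contDiff).pow 2

lemma contDiff_f0v : ContDiff ℝ (⊤ : ℕ∞) (f0v (d := d)) := by
  have h1 : ContDiff ℝ (⊤ : ℕ∞) (fun v : Fin d → ℝ => -(∑ i, v i ^ 2) / 2) :=
    contDiff_sumsq.neg.div_const 2
  exact Real.contDiff_exp.comp h1

lemma pd_mul {u w : (Fin d → ℝ) → ℝ} {x : Fin d → ℝ} (hu : DifferentiableAt ℝ u x)
    (hw : DifferentiableAt ℝ w x) (s : Fin d) :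
    pd s (fun y => u y * w y) x = pd s u x * w x + u x * pd s w x := by
  simp only [pd, fderiv_fun_mul hu hw, ContinuousLinearMap.add_apply, ContinuousLinearMap.smul_apply,
    smul_eq_mul]
  ring

lemma pd_sub {u w : (Fin d → ℝ) → ℝ} {x : Fin d → ℝ} (hu : DifferentiableAt ℝ u x)
    (hw : DifferentiableAt ℝ w x) (s : Fin d) :
    pd s (fun y => u y - w y) x = pd s u x - pd s w x := by
  simp only [pd, fderiv_fun_sub hu hw, ContinuousLinearMap.sub_apply]

lemma pd_const (c : ℝ) (x : Fin d → ℝ) (s : Fin d) : pd s (fun _ => c) x = 0 := by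
  simp [pd]

lemma pd_const_mul {u : (Fin d → ℝ) → ℝ} {x : Fin d → ℝ} (hu : DifferentiableAt ℝ u x)
    (c : ℝ) (s : Fin d) : pd s (fun y => c * u y) x = c * pd s u x := by
  simp only [pd, fderiv_const_mul hu, ContinuousLinearMap.smul_apply, smul_eq_mul]

lemma pd_div_const {u : (Fin d → ℝ) → ℝ} {x : Fin d → ℝ} (hu : DifferentiableAt ℝ u x)
    (c : ℝ) (s : Fin d) :
    pd s (fun y => u y / c) x = pd s u x / c := by
  simp only [div_eq_mul_inv, pd, fderiv_mul_const hu, ContinuousLinearMap.smul_apply,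
    smul_eq_mul]
  ring

lemma pd_sum {ι : Type*} (t : Finset ι) {u : ι → (Fin d → ℝ) → ℝ} {x : Fin d → ℝ}
    (hu : ∀ i ∈ t, DifferentiableAt ℝ (u i) x) (s : Fin d) :
    pd s (fun y => ∑ i ∈ t, u i y) x = ∑ i ∈ t, pd s (u i) x := by
  simp only [pd, fderiv_fun_sum hu, ContinuousLinearMap.sum_apply]

lemma pd_sumsq (x : Fin d → ℝ) (s : Fin d) :
    pd s (fun v : Fin d → ℝ => ∑ i, v i ^ 2) x = 2 * x s := by
  have h1 : ∀ i : Fin d, HasFDerivAt (fun v : Fin d → ℝ => v i ^ 2)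
      ((2 * x i) • ContinuousLinearMap.proj (R := ℝ) (φ := fun _ : Fin d => ℝ) i) x := by
    intro i
    have h2 := (ContinuousLinearMap.proj (R := ℝ) (φ := fun _ : Fin d => ℝ) i).hasFDerivAt (x := x)
    have h3 := h2.fun_mul h2
    simp only [ContinuousLinearMap.proj_apply] at h3
    have h4 : x i • ContinuousLinearMap.proj (R := ℝ) (φ := fun _ : Fin d => ℝ) i
        + x i • ContinuousLinearMap.proj (R := ℝ) (φ := fun _ : Fin d => ℝ) i
        = (2 * x i) • ContinuousLinearMap.proj (R := ℝ) (φ := fun _ : Fin d => ℝ) i := by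
      rw [two_mul, add_smul]
    rw [h4] at h3
    have h5 : (fun v : Fin d → ℝ => v i * v i) = fun v : Fin d → ℝ => v i ^ 2 := by
      funext v; ring
    rwa [h5] at h3
  have h6 : HasFDerivAt (fun v : Fin d → ℝ => ∑ i, v i ^ 2)
      (∑ i, (2 * x i) • ContinuousLinearMap.proj (R := ℝ) (φ := fun _ : Fin d => ℝ) i) x :=
    HasFDerivAt.fun_sum fun i _ => h1 i
  rw [pd, h6.fderiv]
  simp [Pi.single_apply, Finset.sum_ite_eq', mul_comm]

lemma pd_f0v (x : Fin d → ℝ) (s : Fin d) : pd s f0v x = -(x s) * f0v x := by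
  have hdq : DifferentiableAt ℝ (fun v : Fin d → ℝ => ∑ i, v i ^ 2) x :=
    (contDiff_sumsq.differentiable (by simp)).differentiableAt
  have h0 : HasFDerivAt (fun v : Fin d → ℝ => -(∑ i, v i ^ 2) / 2)
      (fderiv ℝ (fun v : Fin d → ℝ => -(∑ i, v i ^ 2) / 2) x) x := by
    apply DifferentiableAt.hasFDerivAt
    have heq : (fun v : Fin d → ℝ => -(∑ i, v i ^ 2) / 2)
        = fun v : Fin d → ℝ => (-(1:ℝ)/2) * ∑ i, v i ^ 2 := by funext v; ring
    rw [heq]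
    exact hdq.const_mul _
  have h1 := h0.exp
  have h2 : pd s f0v x = Real.exp (-(∑ i, x i ^ 2) / 2) *
      pd s (fun v : Fin d → ℝ => -(∑ i, v i ^ 2) / 2) x := by
    rw [pd, show f0v = fun v : Fin d → ℝ => Real.exp (-(∑ i, v i ^ 2) / 2) from rfl, h1.fderiv]
    simp [pd]
  rw [h2]
  have h3 : pd s (fun v : Fin d → ℝ => -(∑ i, v i ^ 2) / 2) x = -(x s) := by
    rw [pd_div_const hdq.fun_neg]
    have h4 : pd s (fun v : Fin d → ℝ => -(∑ i, v i ^ 2)) x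
        = - pd s (fun v : Fin d → ℝ => ∑ i, v i ^ 2) x := by
      simp only [pd, fderiv_fun_neg, ContinuousLinearMap.neg_apply]
    rw [h4, pd_sumsq]; ring
  rw [h3, f0v]; ring

lemma pd_coord (x : Fin d → ℝ) (s i : Fin d) :
    pd s (fun v : Fin d → ℝ => v i) x = if i = s then 1 else 0 := by
  have h1 : (fun v : Fin d → ℝ => v i)
      = ⇑(ContinuousLinearMap.proj (R := ℝ) (φ := fun _ : Fin d => ℝ) i) := rfl
  rw [pd, h1, ContinuousLinearMap.fderiv, ContinuousLinearMap.proj_apply, Pi.single_apply]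


open Filter in
lemma tendsto_cexp_quarter (C : ℝ) {l : Filter ℝ} (h : Tendsto (fun t : ℝ => t ^ 2) l atTop) :
    Tendsto (fun t : ℝ => C * Real.exp (-t ^ 2 / 4)) l (nhds 0) := by
  have h1 : Tendsto (fun t : ℝ => -t ^ 2 / 4) l atBot := by
    apply Filter.Tendsto.atBot_div_const (by norm_num : (0:ℝ) < 4)
    exact tendsto_neg_atBot_iff.mpr h
  simpa using (Real.tendsto_exp_atBot.comp h1).const_mul C

open Filter in
lemma tendsto_sq_atTop : Tendsto (fun t : ℝ => t ^ 2) atTop atTop :=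
  tendsto_pow_atTop two_ne_zero

open Filter in
lemma tendsto_sq_atBot : Tendsto (fun t : ℝ => t ^ 2) atBot atTop := by
  have h := (tendsto_pow_atTop (two_ne_zero)).comp (tendsto_abs_atBot_atTop (G := ℝ))
  simpa [Function.comp_def, sq_abs] using h

lemma poly_le_exp (p : ℕ) (x : ℝ) (hx : 0 ≤ x) :
    (1 + x) ^ p ≤ Real.exp ((p : ℝ) + (p : ℝ) ^ 2) * Real.exp (x ^ 2 / 4) := by
  have h1 : (1 + x) ^ p ≤ Real.exp ((p : ℝ) * (1 + x)) := by
    have h2 : 1 + x ≤ Real.exp (1 + x) := by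
      have := Real.add_one_le_exp (1 + x); linarith
    calc (1 + x) ^ p ≤ (Real.exp (1 + x)) ^ p := by
          exact pow_le_pow_left₀ (by linarith) h2 p
      _ = Real.exp ((p : ℝ) * (1 + x)) := by
          rw [← Real.exp_nat_mul]
  refine h1.trans ?_
  rw [← Real.exp_add]
  apply Real.exp_le_exp.mpr
  nlinarith [sq_nonneg (x / 2 - (p : ℝ)), sq_nonneg x]

lemma norm_sq_le_sumsq (v : Fin d → ℝ) : ‖v‖ ^ 2 ≤ ∑ i, v i ^ 2 := by
  rcases isEmpty_or_nonempty (Fin d) with h | h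
  · have : v = 0 := Subsingleton.elim _ _
    simp [this]
  · have h1 : ‖v‖ ≤ Real.sqrt (∑ i, v i ^ 2) := by
      rw [pi_norm_le_iff_of_nonneg (Real.sqrt_nonneg _)]
      intro i
      rw [Real.norm_eq_abs, ← Real.sqrt_sq_eq_abs]
      exact Real.sqrt_le_sqrt (Finset.single_le_sum (fun j _ => sq_nonneg (v j))
        (Finset.mem_univ i))
    calc ‖v‖ ^ 2 ≤ Real.sqrt (∑ i, v i ^ 2) ^ 2 := pow_le_pow_left₀ (norm_nonneg _) h1 2
      _ = ∑ i, v i ^ 2 := Real.sq_sqrt (Finset.sum_nonneg fun i _ => sq_nonneg _)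

lemma f0v_le (v : Fin d → ℝ) : f0v v ≤ Real.exp (-‖v‖ ^ 2 / 2) := by
  rw [f0v]
  apply Real.exp_le_exp.mpr
  have := norm_sq_le_sumsq v
  linarith

lemma f0v_nonneg (v : Fin d → ℝ) : 0 ≤ f0v v := Real.exp_nonneg _

lemma f0v_mul_le {g : (Fin d → ℝ) → ℝ} {C : ℝ} {p : ℕ} (hC : 0 ≤ C)
    (hb : ∀ v, |g v| ≤ C * (1 + ‖v‖) ^ p) (v : Fin d → ℝ) :
    |f0v v * g v| ≤ C * Real.exp ((p : ℝ) + (p : ℝ) ^ 2) * Real.exp (-‖v‖ ^ 2 / 4) := by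
  have h1 : |f0v v * g v| = f0v v * |g v| := by
    rw [abs_mul, abs_of_nonneg (f0v_nonneg v)]
  rw [h1]
  calc f0v v * |g v| ≤ Real.exp (-‖v‖ ^ 2 / 2) * (C * (1 + ‖v‖) ^ p) :=
        mul_le_mul (f0v_le v) (hb v) (abs_nonneg _) (Real.exp_nonneg _)
    _ ≤ Real.exp (-‖v‖ ^ 2 / 2) * (C * (Real.exp ((p : ℝ) + (p : ℝ) ^ 2)
          * Real.exp (‖v‖ ^ 2 / 4))) := by
        refine mul_le_mul_of_nonneg_left (mul_le_mul_of_nonneg_left ?_ hC) (Real.exp_nonneg _)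
        exact poly_le_exp p ‖v‖ (norm_nonneg _)
    _ = C * Real.exp ((p : ℝ) + (p : ℝ) ^ 2) * Real.exp (-‖v‖ ^ 2 / 4) := by
        rw [← Real.exp_add, mul_assoc, mul_comm (rexp (-‖v‖ ^ 2 / 2)), mul_assoc, ← Real.exp_add,
          ← Real.exp_add]
        ring_nf

lemma integrable_exp_quarter (hd : 0 < d) :
    Integrable (fun v : Fin d → ℝ => Real.exp (-‖v‖ ^ 2 / 4)) := by
  have hpos : (0:ℝ) < 1 / (4 * d) := by positivity
  have hInt : Integrable (fun v : Fin d → ℝ =>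
      ∏ i, Real.exp (-(1 / (4 * (d:ℝ))) * (v i) ^ 2)) :=
    Integrable.fintype_prod (f := fun _ t => Real.exp (-(1 / (4 * (d:ℝ))) * t ^ 2))
      (fun i => integrable_exp_neg_mul_sq hpos)
  refine hInt.mono' ?_ ?_
  · exact (Continuous.aestronglyMeasurable (by continuity))
  · refine Filter.Eventually.of_forall fun v => ?_
    rw [Real.norm_eq_abs, abs_of_nonneg (Real.exp_nonneg _), ← Real.exp_sum]
    apply Real.exp_le_exp.mpr
    have h1 : ∑ i, v i ^ 2 ≤ (d : ℝ) * ‖v‖ ^ 2 := by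
      have h2 : ∀ i : Fin d, v i ^ 2 ≤ ‖v‖ ^ 2 := by
        intro i
        rw [← sq_abs (v i)]
        apply pow_le_pow_left₀ (abs_nonneg _)
        exact (norm_le_pi_norm v i)
      calc ∑ i, v i ^ 2 ≤ ∑ _i : Fin d, ‖v‖ ^ 2 := Finset.sum_le_sum fun i _ => h2 i
        _ = (d : ℝ) * ‖v‖ ^ 2 := by simp [mul_comm]
    have hd1 : (0:ℝ) < d := by exact_mod_cast hd
    rw [Finset.sum_congr rfl (fun i _ => by ring :
      ∀ i ∈ Finset.univ, -(1 / (4 * (d:ℝ))) * (v i) ^ 2 = -(v i ^ 2) / (4 * (d:ℝ)))]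
    rw [← Finset.sum_div]
    rw [div_le_div_iff₀ (by positivity) (by positivity)]
    have h3 : ∑ i, -v i ^ 2 = -∑ i, v i ^ 2 := by simp
    rw [h3]
    nlinarith [h1]

lemma integrable_f0v_mul (hd : 0 < d) {g : (Fin d → ℝ) → ℝ} (hg : PG g) :
    Integrable (fun v : Fin d → ℝ => f0v v * g v) := by
  obtain ⟨hc, C, p, hC, hb⟩ := hg
  refine ((integrable_exp_quarter hd).const_mul
    (C * Real.exp ((p : ℝ) + (p : ℝ) ^ 2))).mono' ?_ ?_
  · exact ((contDiff_f0v.continuous.mul hc)).aestronglyMeasurable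
  · exact Filter.Eventually.of_forall fun v => f0v_mul_le hC hb v


variable {d' : ℕ}

/-- Non-dependent `Fin.insertNth`, to help elaboration. -/
def insL (s : Fin (d' + 1)) (t : ℝ) (y : Fin d' → ℝ) : Fin (d' + 1) → ℝ :=
  Fin.insertNth (α := fun _ => ℝ) s t y

lemma insL_apply_same (s : Fin (d' + 1)) (t : ℝ) (y : Fin d' → ℝ) : insL s t y s = t :=
  Fin.insertNth_apply_same (α := fun _ => ℝ) s t y

lemma insL_apply_succAbove (s : Fin (d' + 1)) (t : ℝ) (y : Fin d' → ℝ) (j : Fin d') :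
    insL s t y (s.succAbove j) = y j :=
  Fin.insertNth_apply_succAbove (α := fun _ => ℝ) s t y j

lemma insL_eq_line (s : Fin (d' + 1)) (y : Fin d' → ℝ) (t : ℝ) :
    insL s t y = insL s 0 y + t • (Pi.single s 1 : Fin (d' + 1) → ℝ) := by
  funext i
  refine Fin.succAboveCases s ?_ ?_ i
  · simp [insL_apply_same, Pi.single_eq_same]
  · intro j
    simp [insL_apply_succAbove, Pi.single_eq_of_ne (Fin.succAbove_ne s j)]

lemma hasDerivAt_insL (s : Fin (d' + 1)) (y : Fin d' → ℝ) (t : ℝ) :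
    HasDerivAt (fun t' : ℝ => insL s t' y) (Pi.single s 1) t := by
  have h : (fun t' : ℝ => insL s t' y)
      = fun t' : ℝ => insL s 0 y + t' • (Pi.single s 1 : Fin (d' + 1) → ℝ) :=
    funext (insL_eq_line s y)
  rw [h]
  simpa using (((hasDerivAt_id t).smul_const (Pi.single s (1:ℝ)))).const_add (insL s 0 y)

lemma continuous_insL (s : Fin (d' + 1)) (y : Fin d' → ℝ) :
    Continuous (fun t : ℝ => insL s t y) := by
  have h : (fun t : ℝ => insL s t y)
      = fun t : ℝ => insL s 0 y + t • (Pi.single s 1 : Fin (d' + 1) → ℝ) :=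
    funext (insL_eq_line s y)
  rw [h]
  exact continuous_const.add (continuous_id.smul continuous_const)

lemma sumsq_insL (s : Fin (d' + 1)) (t : ℝ) (y : Fin d' → ℝ) :
    ∑ i, (insL s t y i) ^ 2 = t ^ 2 + ∑ j, y j ^ 2 := by
  rw [Fin.sum_univ_succAbove (fun i => (insL s t y i) ^ 2) s]
  simp [insL_apply_same, insL_apply_succAbove]

lemma norm_insL_le (s : Fin (d' + 1)) (t : ℝ) (y : Fin d' → ℝ) :
    ‖insL s t y‖ ≤ |t| + ‖y‖ := by
  rw [pi_norm_le_iff_of_nonneg (by positivity)]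
  intro i
  refine Fin.succAboveCases s ?_ ?_ i
  · rw [insL_apply_same, Real.norm_eq_abs]
    linarith [norm_nonneg y]
  · intro j
    rw [insL_apply_succAbove]
    have h := norm_le_pi_norm y j
    rw [Real.norm_eq_abs] at h ⊢
    linarith [abs_nonneg t]

lemma slice_bound (s : Fin (d' + 1)) (y : Fin d' → ℝ) {g : (Fin (d' + 1) → ℝ) → ℝ}
    {C : ℝ} {p : ℕ} (hC : 0 ≤ C) (hb : ∀ v, |g v| ≤ C * (1 + ‖v‖) ^ p) (t : ℝ) :
    |f0v (insL s t y) * g (insL s t y)| ≤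
      (C * (1 + ‖y‖) ^ p * Real.exp ((p : ℝ) + (p : ℝ) ^ 2)) * Real.exp (-t ^ 2 / 4) := by
  set v := insL s t y with hv
  have h0 : f0v v ≤ Real.exp (-t ^ 2 / 2) := by
    rw [f0v, hv, sumsq_insL]
    apply Real.exp_le_exp.mpr
    have := Finset.sum_nonneg (fun j (_ : j ∈ Finset.univ) => sq_nonneg (y j))
    linarith
  have h1 : |g v| ≤ C * ((1 + ‖y‖) ^ p * (1 + |t|) ^ p) := by
    refine (hb v).trans ?_
    rw [← mul_pow]
    refine mul_le_mul_of_nonneg_left (pow_le_pow_left₀ (by positivity) ?_ p) hC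
    have h2 := norm_insL_le s t y
    nlinarith [abs_nonneg t, norm_nonneg y]
  have h3 : (1 + |t|) ^ p ≤ Real.exp ((p : ℝ) + (p : ℝ) ^ 2) * Real.exp (t ^ 2 / 4) := by
    have := poly_le_exp p |t| (abs_nonneg t)
    rwa [sq_abs] at this
  have h4 : |f0v v * g v| = f0v v * |g v| := by
    rw [abs_mul, abs_of_nonneg (f0v_nonneg v)]
  rw [h4]
  calc f0v v * |g v| ≤ Real.exp (-t ^ 2 / 2) * (C * ((1 + ‖y‖) ^ p * (1 + |t|) ^ p)) :=
        mul_le_mul h0 h1 (abs_nonneg _) (Real.exp_nonneg _)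
    _ ≤ Real.exp (-t ^ 2 / 2) * (C * ((1 + ‖y‖) ^ p
          * (Real.exp ((p : ℝ) + (p : ℝ) ^ 2) * Real.exp (t ^ 2 / 4)))) := by
        refine mul_le_mul_of_nonneg_left (mul_le_mul_of_nonneg_left ?_ hC) (Real.exp_nonneg _)
        exact mul_le_mul_of_nonneg_left h3 (by positivity)
    _ = (C * (1 + ‖y‖) ^ p * Real.exp ((p : ℝ) + (p : ℝ) ^ 2))
          * (Real.exp (t ^ 2 / 4) * Real.exp (-t ^ 2 / 2)) := by ring
    _ = (C * (1 + ‖y‖) ^ p * Real.exp ((p : ℝ) + (p : ℝ) ^ 2)) * Real.exp (-t ^ 2 / 4) := by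
        rw [← Real.exp_add]; ring_nf

lemma integrable_cexp_quarter (C : ℝ) :
    Integrable (fun t : ℝ => C * Real.exp (-t ^ 2 / 4)) := by
  have h : (fun x : ℝ => C * Real.exp (-(1/4 : ℝ) * x ^ 2))
      = fun t : ℝ => C * Real.exp (-t ^ 2 / 4) := by
    funext x; congr 1; ring
  have := (integrable_exp_neg_mul_sq (by norm_num : (0:ℝ) < 1/4)).const_mul C
  rwa [h] at this

lemma slice_integrable (s : Fin (d' + 1)) (y : Fin d' → ℝ) {g : (Fin (d' + 1) → ℝ) → ℝ}
    (hg : PG g) :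
    Integrable (fun t : ℝ => f0v (insL s t y) * g (insL s t y)) := by
  obtain ⟨hc, C, p, hC, hb⟩ := hg
  refine (integrable_cexp_quarter (C * (1 + ‖y‖) ^ p
    * Real.exp ((p : ℝ) + (p : ℝ) ^ 2))).mono' ?_ ?_
  · exact ((contDiff_f0v.continuous.comp (continuous_insL s y)).mul
      (hc.comp (continuous_insL s y))).aestronglyMeasurable
  · exact Filter.Eventually.of_forall fun t => slice_bound s y hC hb t

lemma pd_f0v_mul {g : (Fin d → ℝ) → ℝ} (hg : ContDiff ℝ (⊤ : ℕ∞) g) (s : Fin d)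
    (v : Fin d → ℝ) :
    pd s (fun w => f0v w * g w) v = f0v v * (pd s g v - v s * g v) := by
  rw [pd_mul ((contDiff_f0v.differentiable (by simp)).differentiableAt)
    ((hg.differentiable (by simp)).differentiableAt), pd_f0v]
  ring

open Filter in
lemma integral_pd_f0v_mul_eq_zero (s : Fin (d' + 1)) {g : (Fin (d' + 1) → ℝ) → ℝ}
    (hg : ContDiff ℝ (⊤ : ℕ∞) g) (h1 : PG g) (h2 : PG (pd s g)) :
    ∫ v : Fin (d' + 1) → ℝ, f0v v * (pd s g v - v s * g v) = 0 := by
  classical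
  set G : (Fin (d' + 1) → ℝ) → ℝ := fun v => pd s g v - v s * g v with hGdef
  have hPGG : PG G := h2.sub ((pg_coord s).mul h1)
  set F : (Fin (d' + 1) → ℝ) → ℝ := fun v => f0v v * G v with hFdef
  have hIntF : Integrable F := integrable_f0v_mul (Nat.succ_pos d') hPGG
  have hHsm : ContDiff ℝ (⊤ : ℕ∞) (fun w : Fin (d' + 1) → ℝ => f0v w * g w) :=
    contDiff_f0v.mul hg
  have mp := volume_preserving_piFinSuccAbove (fun _ : Fin (d' + 1) => ℝ) s
  set e := MeasurableEquiv.piFinSuccAbove (fun _ : Fin (d' + 1) => ℝ) s with he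
  have hsymm : ∀ q : ℝ × (Fin d' → ℝ), e.symm q = insL s q.1 q.2 := by
    intro q
    rw [he, MeasurableEquiv.piFinSuccAbove_symm_apply]
    rfl
  have heq1 : ∫ v, F v = ∫ q : ℝ × (Fin d' → ℝ), F (insL s q.1 q.2) := by
    rw [← (mp.symm).integral_comp e.symm.measurableEmbedding F]
    apply integral_congr_ae
    filter_upwards with q
    rw [hsymm]
  have hInt2 : Integrable (fun q : ℝ × (Fin d' → ℝ) => F (insL s q.1 q.2)) := by
    have h3 := ((mp.symm).integrable_comp_emb e.symm.measurableEmbedding (g := F)).mpr hIntF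
    have h4 : (F ∘ e.symm) = fun q : ℝ × (Fin d' → ℝ) => F (insL s q.1 q.2) := by
      funext q
      simp only [Function.comp_apply, hsymm]
    rwa [h4] at h3
  have hvol : (volume : Measure (ℝ × (Fin d' → ℝ))) = Measure.prod volume volume :=
    Measure.volume_eq_prod _ _
  have heq2 : ∫ q : ℝ × (Fin d' → ℝ), F (insL s q.1 q.2)
      = ∫ t : ℝ, ∫ y : Fin d' → ℝ, F (insL s t y) := by
    rw [hvol]
    exact integral_prod _ (by rwa [← hvol])
  have hInt3 : Integrable (Function.uncurry fun t (y : Fin d' → ℝ) => F (insL s t y))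
      (Measure.prod volume volume) := by
    rw [← hvol]
    exact hInt2
  have heq3 : ∫ t : ℝ, ∫ y : Fin d' → ℝ, F (insL s t y)
      = ∫ y : Fin d' → ℝ, ∫ t : ℝ, F (insL s t y) :=
    integral_integral_swap hInt3
  have hzero : ∀ y : Fin d' → ℝ, (∫ t : ℝ, F (insL s t y)) = 0 := by
    intro y
    obtain ⟨hcg, C, p, hC, hb⟩ := h1
    have hder : ∀ t : ℝ,
        HasDerivAt (fun t' : ℝ => f0v (insL s t' y) * g (insL s t' y))
          (F (insL s t y)) t := by
      intro t
      have hH := ((hHsm.differentiable (by simp)).differentiableAt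
        (x := insL s t y)).hasFDerivAt
      have hcomp := hH.comp_hasDerivAt t (hasDerivAt_insL s y t)
      have h5 : fderiv ℝ (fun w : Fin (d' + 1) → ℝ => f0v w * g w) (insL s t y)
          (Pi.single s 1) = F (insL s t y) := by
        rw [show fderiv ℝ (fun w : Fin (d' + 1) → ℝ => f0v w * g w) (insL s t y)
          (Pi.single s 1) = pd s (fun w : Fin (d' + 1) → ℝ => f0v w * g w)
          (insL s t y) from rfl, pd_f0v_mul hg]
      rw [h5] at hcomp
      exact hcomp
    have hint : Integrable (fun t : ℝ => F (insL s t y)) :=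
      slice_integrable s y hPGG
    have hbnd := fun t : ℝ => slice_bound s y hC hb t
    have htop : Tendsto (fun t : ℝ => f0v (insL s t y) * g (insL s t y))
        atTop (nhds 0) :=
      squeeze_zero_norm hbnd (tendsto_cexp_quarter _ tendsto_sq_atTop)
    have hbot : Tendsto (fun t : ℝ => f0v (insL s t y) * g (insL s t y))
        atBot (nhds 0) :=
      squeeze_zero_norm hbnd (tendsto_cexp_quarter _ tendsto_sq_atBot)
    have := integral_of_hasDerivAt_of_tendsto hder hint hbot htop
    simpa using this
  rw [heq1, heq2, heq3]
  simp only [hzero]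
  simp

end Aux

/-- if `V_{d+2}^n = (|v|²−1)/‖|v|²−1‖`, then `E^n · j^n` lies in the span of
`{X_i^n, ∂_t X_i^n, K_i^{n+1}}`, hence in the span of the augmented basis `{X̃_k^{n+1}}`,
so that its orthonormal expansion in the `X̃_k^{n+1}` reproduces it exactly. -/
theorem Edotj_in_augmented_span
    (d r R : ℕ) (hd : 0 < d) (hr : d + 2 ≤ r)
    (τ : ℝ) (hτ : 0 < τ)
    (S : Fin r → Fin r → ℝ)
    (E : (Fin d → ℝ) → Fin d → ℝ)
    (hEsm : ∀ s, ContDiff ℝ (⊤ : ℕ∞) fun x => E x s)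
    (hEper : ∀ s, Per fun x => E x s)
    (X : Fin r → (Fin d → ℝ) → ℝ)
    (hXsm : ∀ i, ContDiff ℝ (⊤ : ℕ∞) (X i)) (hXper : ∀ i, Per (X i))
    (hXon : ∀ i j, ipx (X i) (X j) = if i = j then (1 : ℝ) else 0)
    (V : Fin r → (Fin d → ℝ) → ℝ)
    (hVsm : ∀ j, ContDiff ℝ (⊤ : ℕ∞) (V j)) (hVpoly : ∀ j, PolyAll (V j))
    (hVon : ∀ i j, ipv (V i) (V j) = if i = j then (1 : ℝ) else 0)
    -- the low-rank function f^n and the right-hand side RHS[f^n]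
    (fn : (Fin d → ℝ) → (Fin d → ℝ) → ℝ)
    (hfn : fn = fun x v => f0v v * ∑ i, ∑ j, X i x * S i j * V j v)
    (RHS : (Fin d → ℝ) → (Fin d → ℝ) → ℝ)
    (hRHS : RHS = fun x v =>
      -(∑ s, v s * pd s (fun y => fn y v) x) + ∑ s, E x s * pd s (fn x) v)
    -- the K step: K^{n+1}_k = K^n_k + τ ∫ V_k RHS[f^n] dv
    (K1 : Fin r → (Fin d → ℝ) → ℝ)
    (hK1 : K1 = fun k x => (∑ i, X i x * S i k) + τ * ∫ v, V k v * RHS x v)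
    -- the augmented basis X̃^{n+1}: orthonormal, containing X_i, ∂_t X_i and K_i^{n+1}
    (Xt : Fin R → (Fin d → ℝ) → ℝ)
    (hXtsm : ∀ k, ContDiff ℝ (⊤ : ℕ∞) (Xt k)) (hXtper : ∀ k, Per (Xt k))
    (hXton : ∀ k l, ipx (Xt k) (Xt l) = if k = l then (1 : ℝ) else 0)
    (hspanX : ∀ i, X i ∈ Submodule.span ℝ (Set.range Xt))
    (hspanDX : ∀ i t, pd t (X i) ∈ Submodule.span ℝ (Set.range Xt))
    (hspanK : ∀ i, K1 i ∈ Submodule.span ℝ (Set.range Xt))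
    -- the assumption V_{d+2} = (|v|²−1)/‖|v|²−1‖
    (hVd2 : V ⟨d + 1, by omega⟩
      = fun v => ((∑ i, v i ^ 2) - 1) / nv fun v : Fin d → ℝ => (∑ i, v i ^ 2) - 1)
    -- the moment j^n
    (jn : (Fin d → ℝ) → Fin d → ℝ) (hjn : jn = fun x s => ∫ v, v s * fn x v) :
    (fun x => ∑ s, E x s * jn x s) ∈ Submodule.span ℝ
        (Set.range X ∪ Set.range (fun p : Fin r × Fin d => pd p.2 (X p.1))
          ∪ Set.range K1) ∧
      ∀ x, (∑ k, ipx (Xt k) (fun y => ∑ s, E y s * jn y s) * Xt k x)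
        = ∑ s, E x s * jn x s := by
  classical
  obtain ⟨d', rfl⟩ : ∃ d', d = d' + 1 := ⟨d - 1, by omega⟩
  set k0 : Fin r := ⟨d' + 1 + 1, by omega⟩ with hk0def
  have hVk0 : V k0 = fun v : Fin (d' + 1) → ℝ =>
      ((∑ i, v i ^ 2) - 1) / nv (fun v : Fin (d' + 1) → ℝ => (∑ i, v i ^ 2) - 1) := hVd2
  set c : ℝ := nv (fun v : Fin (d' + 1) → ℝ => (∑ i, v i ^ 2) - 1) with hcdef
  have hd0 : 0 < d' + 1 := Nat.succ_pos d'
  -- basic regularity of the V's and X's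
  have hdV : ∀ j, Differentiable ℝ (V j) :=
    fun j => (hVsm j).differentiable (by simp)
  have hdX : ∀ i, Differentiable ℝ (X i) :=
    fun i => (hXsm i).differentiable (by simp)
  have pgV : ∀ j, PG (V j) := fun j => pg_of_polyAll (hVsm j).continuous (hVpoly j)
  have pgdV : ∀ (j) (s : Fin (d' + 1)), PG (pd s (V j)) :=
    fun j s => pg_pd (hVsm j) (hVpoly j) s
  -- c ≠ 0
  have hcne : c ≠ 0 := by
    intro hc
    have h1 : V k0 = fun _ => (0:ℝ) := by
      rw [hVk0, hc]
      funext v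
      simp
    have h2 := hVon k0 k0
    rw [if_pos rfl, h1, ipv] at h2
    simp at h2
  -- the basic moment integrals
  set M : Fin (d' + 1) → Fin r → ℝ := fun s j => ∫ v, f0v v * (v s * V j v) with hMdef
  set A : Fin (d' + 1) → Fin r → ℝ := fun s j => ∫ v, f0v v * (V k0 v * (v s * V j v))
    with hAdef
  set B : Fin (d' + 1) → Fin r → ℝ :=
    fun s j => ∫ v, f0v v * (V k0 v * (pd s (V j) v - v s * V j v)) with hBdef
  have hintM : ∀ s j, Integrable (fun v : Fin (d' + 1) → ℝ => f0v v * (v s * V j v)) :=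
    fun s j => integrable_f0v_mul hd0 ((pg_coord s).mul (pgV j))
  have hintA : ∀ s j,
      Integrable (fun v : Fin (d' + 1) → ℝ => f0v v * (V k0 v * (v s * V j v))) :=
    fun s j => integrable_f0v_mul hd0 ((pgV k0).mul ((pg_coord s).mul (pgV j)))
  have hintB : ∀ s j, Integrable (fun v : Fin (d' + 1) → ℝ =>
      f0v v * (V k0 v * (pd s (V j) v - v s * V j v))) :=
    fun s j => integrable_f0v_mul hd0 ((pgV k0).mul ((pgdV j s).sub ((pg_coord s).mul (pgV j))))
  have hintAB : ∀ (s : Fin (d' + 1)) (j : Fin r) (a b : ℝ),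
      Integrable (fun v : Fin (d' + 1) → ℝ => a * (f0v v * (V k0 v * (v s * V j v)))
        + b * (f0v v * (V k0 v * (pd s (V j) v - v s * V j v)))) :=
    fun s j a b => ((hintA s j).const_mul a).add ((hintB s j).const_mul b)
  -- Step 1 : the moments jn
  have hjn' : ∀ x (s : Fin (d' + 1)), jn x s = ∑ i, ∑ j, X i x * S i j * M s j := by
    intro x s
    simp only [hjn]
    have h1 : (fun v : Fin (d' + 1) → ℝ => v s * fn x v)
        = fun v => ∑ i, ∑ j, (X i x * S i j) * (f0v v * (v s * V j v)) := by
      funext v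
      simp only [hfn, Finset.mul_sum]
      exact Finset.sum_congr rfl fun i _ => Finset.sum_congr rfl fun j _ => by ring
    rw [h1, integral_finset_sum]
    · refine Finset.sum_congr rfl fun i _ => ?_
      rw [integral_finset_sum]
      · refine Finset.sum_congr rfl fun j _ => ?_
        rw [integral_const_mul]
      · exact fun j _ => (hintM s j).const_mul _
    · intro i _
      exact integrable_finset_sum _ fun j _ => (hintM s j).const_mul _
  -- Step 2 : pointwise derivatives
  have hA2 : ∀ (v x : Fin (d' + 1) → ℝ) (s : Fin (d' + 1)),
      pd s (fun y => fn y v) x = f0v v * ∑ i, ∑ j, pd s (X i) x * S i j * V j v := by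
    intro v x s
    have hrw : (fun y => fn y v) = fun y => ∑ i, (∑ j, S i j * V j v * f0v v) * X i y := by
      funext y
      simp only [hfn, Finset.mul_sum, Finset.sum_mul]
      exact Finset.sum_congr rfl fun i _ => Finset.sum_congr rfl fun j _ => by ring
    rw [hrw, pd_sum Finset.univ (fun i _ => ((hdX i).differentiableAt.const_mul _)) s]
    have h2 : ∀ i : Fin r, pd s (fun y => (∑ j, S i j * V j v * f0v v) * X i y) x
        = (∑ j, S i j * V j v * f0v v) * pd s (X i) x :=
      fun i => pd_const_mul (hdX i).differentiableAt _ s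
    rw [Finset.sum_congr rfl fun i _ => h2 i]
    simp only [Finset.mul_sum, Finset.sum_mul]
    exact Finset.sum_congr rfl fun i _ => Finset.sum_congr rfl fun j _ => by ring
  have hB2 : ∀ (x v : Fin (d' + 1) → ℝ) (s : Fin (d' + 1)),
      pd s (fn x) v = f0v v * ∑ i, ∑ j, X i x * S i j * (pd s (V j) v - v s * V j v) := by
    intro x v s
    set g : (Fin (d' + 1) → ℝ) → ℝ := fun w => ∑ i, ∑ j, X i x * S i j * V j w with hgdef
    have hgsm : ContDiff ℝ (⊤ : ℕ∞) g :=
      ContDiff.sum fun i _ => ContDiff.sum fun j _ => contDiff_const.mul (hVsm j)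
    have h1 : fn x = fun w => f0v w * g w := by
      funext w
      simp only [hfn, hgdef]
    rw [h1, pd_f0v_mul hgsm s v]
    congr 1
    have h2 : pd s g v = ∑ i, ∑ j, X i x * S i j * pd s (V j) v := by
      rw [hgdef, pd_sum Finset.univ (fun i _ => DifferentiableAt.fun_sum
        fun j _ => ((hdV j).differentiableAt.const_mul _)) s]
      refine Finset.sum_congr rfl fun i _ => ?_
      rw [pd_sum Finset.univ (fun j _ => ((hdV j).differentiableAt.const_mul _)) s]
      exact Finset.sum_congr rfl fun j _ => pd_const_mul (hdV j).differentiableAt _ s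
    have h3 : v s * g v = ∑ i, ∑ j, v s * (X i x * S i j * V j v) := by
      rw [hgdef]
      simp only [Finset.mul_sum]
    rw [h2, h3, ← Finset.sum_sub_distrib]
    refine Finset.sum_congr rfl fun i _ => ?_
    rw [← Finset.sum_sub_distrib]
    exact Finset.sum_congr rfl fun j _ => by ring
  -- Step 3 : value of B
  have hBval : ∀ (s : Fin (d' + 1)) (j : Fin r), B s j = -(2 / c) * M s j := by
    intro s j
    set gb : (Fin (d' + 1) → ℝ) → ℝ := fun v => V k0 v * V j v with hgb
    have hgsm : ContDiff ℝ (⊤ : ℕ∞) gb := (hVsm k0).mul (hVsm j)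
    have hpdgb : pd s gb = fun v => pd s (V k0) v * V j v + V k0 v * pd s (V j) v := by
      funext v
      exact pd_mul (hdV k0).differentiableAt (hdV j).differentiableAt s
    have hPGgb : PG gb := (pgV k0).mul (pgV j)
    have hPGpd : PG (pd s gb) := by
      rw [hpdgb]
      exact ((pgdV k0 s).mul (pgV j)).add ((pgV k0).mul (pgdV j s))
    have hzero := integral_pd_f0v_mul_eq_zero s hgsm hPGgb hPGpd
    have hpdVk0 : ∀ v : Fin (d' + 1) → ℝ, pd s (V k0) v = 2 * v s / c := by
      intro v
      rw [hVk0]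
      have hdq : DifferentiableAt ℝ (fun v : Fin (d' + 1) → ℝ => (∑ i, v i ^ 2) - 1) v :=
        ((contDiff_sumsq.differentiable (by simp)).differentiableAt).sub
          (differentiableAt_const 1)
      rw [pd_div_const hdq c s,
        pd_sub ((contDiff_sumsq.differentiable (by simp)).differentiableAt)
          (differentiableAt_const 1) s,
        pd_sumsq, pd_const]
      ring
    have hsplit : (fun v : Fin (d' + 1) → ℝ => f0v v * (pd s gb v - v s * gb v))
        = fun v => (2 / c) * (f0v v * (v s * V j v))
            + f0v v * (V k0 v * (pd s (V j) v - v s * V j v)) := by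
      funext v
      rw [hpdgb]; simp only [hgb]
      rw [hpdVk0 v]
      ring
    rw [hsplit, integral_add ((hintM s j).const_mul _) (hintB s j),
      integral_const_mul] at hzero
    have hBm : B s j = ∫ v, f0v v * (V k0 v * (pd s (V j) v - v s * V j v)) := rfl
    have hMm : M s j = ∫ v, f0v v * (v s * V j v) := rfl
    rw [← hMm, ← hBm] at hzero
    have h2 : (2 / c) * M s j + B s j = 0 := hzero
    linarith
  -- Step 4 : pointwise expansion of V k0 * RHS
  have hpoint : ∀ x v : Fin (d' + 1) → ℝ, V k0 v * RHS x v =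
      ∑ s, ∑ i, ∑ j, (-(pd s (X i) x * S i j) * (f0v v * (V k0 v * (v s * V j v)))
        + (E x s * (X i x * S i j)) * (f0v v * (V k0 v * (pd s (V j) v - v s * V j v)))) := by
    intro x v
    simp only [hRHS]
    rw [mul_add, mul_neg, Finset.mul_sum, Finset.mul_sum, neg_add_eq_sub,
      ← Finset.sum_sub_distrib]
    refine Finset.sum_congr rfl fun s _ => ?_
    rw [hA2 v x s, hB2 x v s]
    simp only [Finset.mul_sum]
    rw [← Finset.sum_sub_distrib]
    refine Finset.sum_congr rfl fun i _ => ?_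
    rw [← Finset.sum_sub_distrib]
    refine Finset.sum_congr rfl fun j _ => ?_
    ring
  -- Step 5 : value of the K-step integral
  have hIval : ∀ x : Fin (d' + 1) → ℝ, (∫ v, V k0 v * RHS x v) =
      (∑ s, ∑ i, ∑ j, -(pd s (X i) x * S i j) * A s j)
        + (-(2 / c)) * ∑ s, ∑ i, ∑ j, E x s * (X i x * S i j) * M s j := by
    intro x
    have h1 : (∫ v, V k0 v * RHS x v)
        = ∑ s, ∑ i, ∑ j, (-(pd s (X i) x * S i j) * A s j
            + (E x s * (X i x * S i j)) * B s j) := by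
      rw [show (fun v : Fin (d' + 1) → ℝ => V k0 v * RHS x v)
          = fun v => ∑ s, ∑ i, ∑ j, (-(pd s (X i) x * S i j)
              * (f0v v * (V k0 v * (v s * V j v)))
            + (E x s * (X i x * S i j)) * (f0v v * (V k0 v * (pd s (V j) v - v s * V j v))))
        from funext fun v => hpoint x v]
      rw [integral_finset_sum _ (fun s _ => integrable_finset_sum _
        (fun i _ => integrable_finset_sum _ (fun j _ => hintAB s j _ _)))]
      refine Finset.sum_congr rfl fun s _ => ?_
      rw [integral_finset_sum _ (fun i _ => integrable_finset_sum _
        (fun j _ => hintAB s j _ _))]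
      refine Finset.sum_congr rfl fun i _ => ?_
      rw [integral_finset_sum _ (fun j _ => hintAB s j _ _)]
      refine Finset.sum_congr rfl fun j _ => ?_
      rw [integral_add ((hintA s j).const_mul _) ((hintB s j).const_mul _),
        integral_const_mul, integral_const_mul]
    rw [h1]
    simp only [hBval, Finset.sum_add_distrib]
    congr 1
    simp only [Finset.mul_sum]
    refine Finset.sum_congr rfl fun s _ => Finset.sum_congr rfl fun i _ =>
      Finset.sum_congr rfl fun j _ => by ring
  -- Step 6 : E·j as triple sum
  have hEd : ∀ x : Fin (d' + 1) → ℝ,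
      ∑ s, E x s * jn x s = ∑ s, ∑ i, ∑ j, E x s * (X i x * S i j) * M s j := by
    intro x
    refine Finset.sum_congr rfl fun s _ => ?_
    rw [hjn' x s]
    simp only [Finset.mul_sum]
    exact Finset.sum_congr rfl fun i _ => Finset.sum_congr rfl fun j _ => by ring
  -- Step 7 : main functional identity
  have hfinal : ∀ x : Fin (d' + 1) → ℝ, ∑ s, E x s * jn x s =
      (c / (2 * τ)) * (∑ i, X i x * S i k0)
        + (c / 2) * (∑ s, ∑ i, ∑ j, -(pd s (X i) x * S i j) * A s j)
        + (-(c / (2 * τ))) * K1 k0 x := by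
    intro x
    have hKx : K1 k0 x = (∑ i, X i x * S i k0) + τ * ∫ v, V k0 v * RHS x v := by
      simp only [hK1]
    rw [hEd x, hKx, hIval x]
    field_simp
    ring
  -- Step 8 : membership in the span
  have hmem : (fun x => ∑ s, E x s * jn x s) ∈ Submodule.span ℝ
      (Set.range X ∪ Set.range (fun p : Fin r × Fin (d' + 1) => pd p.2 (X p.1))
        ∪ Set.range K1) := by
    have hmid : ∀ x : Fin (d' + 1) → ℝ,
        (c / 2) * (∑ s, ∑ i, ∑ j, -(pd s (X i) x * S i j) * A s j)
          = ∑ i, ∑ s, ((c / 2) * ∑ j, -(S i j * A s j)) * pd s (X i) x := by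
      intro x
      simp only [Finset.mul_sum]
      rw [Finset.sum_comm]
      refine Finset.sum_congr rfl fun i _ => Finset.sum_congr rfl fun s _ => ?_
      rw [Finset.sum_mul]
      exact Finset.sum_congr rfl fun j _ => by ring
    have hWrep : (fun x => ∑ s, E x s * jn x s)
        = (∑ i, ((c / (2 * τ)) * S i k0) • X i)
          + (∑ p : Fin r × Fin (d' + 1),
              ((c / 2) * ∑ j, -(S p.1 j * A p.2 j)) • pd p.2 (X p.1))
          + (-(c / (2 * τ))) • K1 k0 := by
      funext x
      simp only [Pi.add_apply, Pi.smul_apply, Finset.sum_apply, smul_eq_mul]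
      rw [hfinal x, hmid x, Fintype.sum_prod_type]
      congr 1
      congr 1
      rw [Finset.mul_sum]
      exact Finset.sum_congr rfl fun i _ => by ring
    rw [hWrep]
    refine Submodule.add_mem _ (Submodule.add_mem _ ?_ ?_) ?_
    · exact Submodule.sum_mem _ fun i _ => Submodule.smul_mem _ _
        (Submodule.subset_span (Set.mem_union_left _ (Set.mem_union_left _ ⟨i, rfl⟩)))
    · exact Submodule.sum_mem _ fun p _ => Submodule.smul_mem _ _
        (Submodule.subset_span (Set.mem_union_left _ (Set.mem_union_right _ ⟨p, rfl⟩)))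
    · exact Submodule.smul_mem _ _
        (Submodule.subset_span (Set.mem_union_right _ ⟨k0, rfl⟩))
  refine ⟨hmem, ?_⟩
  -- Step 9 : reconstruction in the augmented basis
  have hsub : (Set.range X ∪ Set.range (fun p : Fin r × Fin (d' + 1) => pd p.2 (X p.1))
      ∪ Set.range K1) ⊆ (Submodule.span ℝ (Set.range Xt) : Set _) := by
    intro u hu
    rcases hu with (hu | hu) | hu
    · obtain ⟨i, rfl⟩ := hu; exact hspanX i
    · obtain ⟨p, rfl⟩ := hu; exact hspanDX p.1 p.2
    · obtain ⟨i, rfl⟩ := hu; exact hspanK i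
  have hWspan : (fun x => ∑ s, E x s * jn x s) ∈ Submodule.span ℝ (Set.range Xt) :=
    Submodule.span_le.mpr hsub hmem
  obtain ⟨co, hco⟩ := (Submodule.mem_span_range_iff_exists_fun ℝ).mp hWspan
  have hXtc : ∀ k, Continuous (Xt k) := fun k => (hXtsm k).continuous
  have hcube : ∀ f : (Fin (d' + 1) → ℝ) → ℝ, Continuous f →
      IntegrableOn f (cube (d' + 1)) := by
    intro f hf
    have h1 : IntegrableOn f (Set.univ.pi fun _ : Fin (d' + 1) => Set.Icc (0:ℝ) 1) :=
      hf.continuousOn.integrableOn_compact (isCompact_univ_pi fun _ => isCompact_Icc)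
    exact h1.mono_set (Set.pi_mono fun i _ => Set.Ioc_subset_Icc_self)
  have hWx : ∀ x : Fin (d' + 1) → ℝ, (∑ s, E x s * jn x s) = ∑ l, co l * Xt l x := by
    intro x
    have := congrFun hco x
    simpa [Finset.sum_apply, Pi.smul_apply, smul_eq_mul] using this.symm
  have hipxW : ∀ k, ipx (Xt k) (fun y => ∑ s, E y s * jn y s) = co k := by
    intro k
    rw [ipx]
    calc ∫ x in cube (d' + 1), Xt k x * (fun y => ∑ s, E y s * jn y s) x
        = ∫ x in cube (d' + 1), ∑ l, co l * (Xt k x * Xt l x) := by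
          congr 1
          funext x
          rw [show (fun y => ∑ s, E y s * jn y s) x = ∑ s, E x s * jn x s from rfl,
            hWx x, Finset.mul_sum]
          exact Finset.sum_congr rfl fun l _ => by ring
      _ = ∑ l, co l * ∫ x in cube (d' + 1), Xt k x * Xt l x := by
          rw [integral_finset_sum]
          · exact Finset.sum_congr rfl fun l _ => by rw [integral_const_mul]
          · exact fun l _ => (hcube _ ((hXtc k).mul (hXtc l))).const_mul _
      _ = ∑ l, co l * (if k = l then (1:ℝ) else 0) := by
          refine Finset.sum_congr rfl fun l _ => ?_
          rw [show (∫ x in cube (d' + 1), Xt k x * Xt l x) = ipx (Xt k) (Xt l) from rfl,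
            hXton]
      _ = co k := by simp
  intro x
  rw [Finset.sum_congr rfl fun k (_ : k ∈ Finset.univ) => by rw [hipxW k]]
  exact (hWx x).symm
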